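/- Let y = (y_α)_{α ∈ ℕⁿ} be a real sequence whose moment matrix M_k(y), with entries M_k(y)(α,β) = y_{α+β} for α,β ∈ ℕⁿ_k, is positive semidefinite for some k ∈ ℕ. Then for every α ∈ ℕⁿ with |α| ≤ 2k one has |y_α| ≤ max(y_0, max_{i=1,…,n} y_{2k·e_i}), where e_i is the i-th unit multi-index. -/

import Mathlib

/-- Degree `|α|` of a multi-index. -/
def mdeg {n : ℕ} (α : Fin n →₀ ℕ) : ℕ := α.sum fun _ e => e

lemma mdeg_add {n : ℕ} (a b : Fin n →₀ ℕ) : mdeg (a + b) = mdeg a + mdeg b :=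
  Finsupp.sum_add_index' (fun _ => rfl) (fun _ _ _ => rfl)

lemma mdeg_single {n : ℕ} (i : Fin n) (c : ℕ) : mdeg (Finsupp.single i c) = c :=
  Finsupp.sum_single_index rfl

lemma mdeg_zero {n : ℕ} : mdeg (0 : Fin n →₀ ℕ) = 0 := Finsupp.sum_zero_index

lemma apply_le_mdeg {n : ℕ} (a : Fin n →₀ ℕ) (i : Fin n) : a i ≤ mdeg a := by
  by_cases hi : i ∈ a.support
  · exact Finset.single_le_sum (f := fun j => a j) (fun _ _ => Nat.zero_le _) hi
  · simp [Finsupp.notMem_support_iff.mp hi]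

lemma exists_sub {n : ℕ} (m : ℕ) : ∀ (α : Fin n →₀ ℕ), m ≤ mdeg α →
    ∃ γ, γ ≤ α ∧ mdeg γ = m := by
  induction m with
  | zero => exact fun α _ => ⟨0, zero_le, mdeg_zero⟩
  | succ m ih =>
    intro α h
    obtain ⟨γ, hle, hdeg⟩ := ih α (Nat.le_of_succ_le h)
    have hex : ∃ i, γ i < α i := by
      by_contra hc
      push_neg at hc
      have : γ = α := le_antisymm hle (Finsupp.le_def.mpr hc)
      subst this; omega
    obtain ⟨i, hi⟩ := hex
    refine ⟨γ + Finsupp.single i 1, Finsupp.le_def.mpr fun j => ?_,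
      by rw [mdeg_add, mdeg_single, hdeg]⟩
    rw [Finsupp.add_apply, Finsupp.single_apply]
    rcases eq_or_ne i j with rfl | hne
    · simpa using hi
    · simpa [hne] using Finsupp.le_def.mp hle j

lemma finite_bdd {n k : ℕ} : ∃ S : Finset (Fin n →₀ ℕ), ∀ γ, γ ∈ S ↔ mdeg γ ≤ k := by
  classical
  refine ⟨((Finset.univ : Finset (Fin n → Fin (k+1))).image
    (fun f => Finsupp.equivFunOnFinite.symm (fun i => (f i : ℕ)))).filter
    (fun γ => mdeg γ ≤ k), fun γ => ?_⟩
  simp only [Finset.mem_filter, Finset.mem_image, Finset.mem_univ, true_and]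
  constructor
  · exact fun h => h.2
  · intro h
    refine ⟨⟨fun i => ⟨γ i, Nat.lt_succ_of_le ((apply_le_mdeg γ i).trans h)⟩, ?_⟩, h⟩
    ext i
    simp [Finsupp.equivFunOnFinite]

/-- Potential used as tie-break. -/
def pot {n : ℕ} (a : Fin n →₀ ℕ) : ℕ := ∑ i : Fin n, (a i)^2

lemma pot_add_single {n : ℕ} (a : Fin n →₀ ℕ) (i : Fin n) (c : ℕ) :
    pot (a + Finsupp.single i c) = pot a + 2*c*(a i) + c^2 := by
  unfold pot
  rw [← Finset.sum_erase_add _ _ (Finset.mem_univ i),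
      ← Finset.sum_erase_add _ (fun j => (a j)^2) (Finset.mem_univ i)]
  have h1 : ∀ j ∈ Finset.univ.erase i, ((a + Finsupp.single i c) j)^2 = (a j)^2 := by
    intro j hj
    rw [Finsupp.add_apply, Finsupp.single_apply, if_neg (Ne.symm (Finset.mem_erase.mp hj).1)]
    ring
  rw [Finset.sum_congr rfl h1, Finsupp.add_apply, Finsupp.single_apply, if_pos rfl]
  ring

section
variable {n : ℕ} (y : (Fin n →₀ ℕ) → ℝ) (k : ℕ)
  (hpsd : ∀ c : (Fin n →₀ ℕ) →₀ ℝ, (∀ α ∈ c.support, mdeg α ≤ k) →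
      0 ≤ ∑ α ∈ c.support, ∑ β ∈ c.support, c α * c β * y (α + β))

lemma sum_ext (c : (Fin n →₀ ℕ) →₀ ℝ) (T : Finset (Fin n →₀ ℕ)) (hT : c.support ⊆ T) :
    ∑ α ∈ c.support, ∑ β ∈ c.support, c α * c β * y (α + β)
      = ∑ α ∈ T, ∑ β ∈ T, c α * c β * y (α + β) := by
  rw [Finset.sum_subset hT (fun x _ hx => by
    simp [Finsupp.notMem_support_iff.mp hx])]
  refine Finset.sum_congr rfl fun α _ => ?_
  exact Finset.sum_subset hT (fun x _ hx => by simp [Finsupp.notMem_support_iff.mp hx])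

include hpsd in
lemma hdiag (γ : Fin n →₀ ℕ) (hγ : mdeg γ ≤ k) : 0 ≤ y (γ + γ) := by
  have h := hpsd (Finsupp.single γ 1) (by
    intro α hα
    have := Finsupp.support_single_subset hα
    simp only [Finset.mem_singleton] at this
    subst this; exact hγ)
  rwa [sum_ext y _ {γ} Finsupp.support_single_subset, Finset.sum_singleton,
    Finset.sum_singleton, Finsupp.single_eq_same, one_mul, one_mul] at h

include hpsd in
lemma hCS (γ δ : Fin n →₀ ℕ) (hγ : mdeg γ ≤ k) (hδ : mdeg δ ≤ k) :
    y (γ + δ) ^ 2 ≤ y (γ + γ) * y (δ + δ) := by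
  by_cases hne : γ = δ
  · subst hne; rw [sq]
  have key : ∀ t : ℝ, 0 ≤ y (γ + γ) * (t * t) + (2 * y (γ + δ)) * t + y (δ + δ) := by
    intro t
    have h := hpsd (Finsupp.single γ t + Finsupp.single δ 1) (by
      intro α hα
      have := Finsupp.support_add hα
      rcases Finset.mem_union.mp this with h' | h' <;>
        have := Finsupp.support_single_subset h' <;>
        simp only [Finset.mem_singleton] at this <;> subst this
      exacts [hγ, hδ])
    have hsub : (Finsupp.single γ t + Finsupp.single δ 1).support ⊆ {γ, δ} := by
      intro α hα
      have := Finsupp.support_add hα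
      rcases Finset.mem_union.mp this with h' | h' <;>
        have := Finsupp.support_single_subset h' <;>
        simp only [Finset.mem_singleton] at this <;> subst this <;> simp
    rw [sum_ext y _ {γ, δ} hsub, Finset.sum_pair hne] at h
    rw [Finset.sum_pair hne, Finset.sum_pair hne] at h
    have cγ : ((Finsupp.single γ t + Finsupp.single δ 1 : (Fin n →₀ ℕ) →₀ ℝ)) γ = t := by
      simp [Finsupp.single_apply, Ne.symm hne]
    have cδ : ((Finsupp.single γ t + Finsupp.single δ 1 : (Fin n →₀ ℕ) →₀ ℝ)) δ = 1 := by
      simp [Finsupp.single_apply, hne]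
    rw [cγ, cδ] at h
    rw [add_comm δ γ] at h
    nlinarith [h]
  have := discrim_le_zero key
  rw [discrim] at this
  nlinarith [this]

end

theorem stmt8 {n : ℕ} (y : (Fin n →₀ ℕ) → ℝ) (k : ℕ)
    (hpsd : ∀ c : (Fin n →₀ ℕ) →₀ ℝ, (∀ α ∈ c.support, mdeg α ≤ k) →
      0 ≤ ∑ α ∈ c.support, ∑ β ∈ c.support, c α * c β * y (α + β))
    (α : Fin n →₀ ℕ) (hα : mdeg α ≤ 2 * k) :
    |y α| ≤ max (y 0) (⨆ i : Fin n, y (Finsupp.single i (2 * k))) := by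
  classical
  set M := max (y 0) (⨆ i : Fin n, y (Finsupp.single i (2 * k))) with hMdef
  have hy0 : 0 ≤ y 0 := by
    have := hdiag y k hpsd 0 (by rw [mdeg_zero]; exact Nat.zero_le k)
    simpa using this
  have hsingle_le : ∀ i : Fin n, y (Finsupp.single i (2 * k)) ≤ M := by
    intro i
    rw [hMdef]
    exact le_trans (le_ciSup (f := fun i : Fin n => y (Finsupp.single i (2 * k)))
      (Set.Finite.bddAbove (Set.finite_range _)) i) (le_max_right _ _)
  obtain ⟨S, hS⟩ := finite_bdd (n := n) (k := k)
  have hS0 : (0 : Fin n →₀ ℕ) ∈ S := (hS 0).mpr (by rw [mdeg_zero]; exact Nat.zero_le k)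
  obtain ⟨γ0, hγ0S, hγ0max⟩ := S.exists_max_image (fun γ => y (γ + γ)) ⟨0, hS0⟩
  set D := y (γ0 + γ0) with hDdef
  have hDmax : ∀ γ, mdeg γ ≤ k → y (γ + γ) ≤ D := fun γ hγ => hγ0max γ ((hS γ).mpr hγ)
  set S1 := S.filter (fun γ => D ≤ y (γ + γ)) with hS1def
  obtain ⟨γ1, hγ1S1, hγ1max⟩ := S1.exists_max_image mdeg ⟨γ0, Finset.mem_filter.mpr ⟨hγ0S, le_refl D⟩⟩
  set S2 := S1.filter (fun γ => mdeg γ1 ≤ mdeg γ) with hS2def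
  obtain ⟨γs, hγsS2, hγsmax⟩ := S2.exists_max_image pot
    ⟨γ1, Finset.mem_filter.mpr ⟨hγ1S1, le_refl _⟩⟩
  have hγsS1 : γs ∈ S1 := (Finset.mem_filter.mp hγsS2).1
  have hγsk : mdeg γs ≤ k := (hS γs).mp (Finset.mem_filter.mp hγsS1).1
  have hγsD : y (γs + γs) = D := le_antisymm (hDmax γs hγsk) (Finset.mem_filter.mp hγsS1).2
  have hdegs : mdeg γs = mdeg γ1 :=
    le_antisymm (hγ1max γs hγsS1) (Finset.mem_filter.mp hγsS2).2
  -- key claim : D ≤ M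
  have hDM : D ≤ M := by
    by_contra hcon
    push_neg at hcon
    have hDpos : 0 < D := lt_of_le_of_lt (le_trans hy0 (le_max_left _ _)) hcon
    have hγs0 : γs ≠ 0 := by
      intro h
      rw [h] at hγsD
      simp only [add_zero] at hγsD
      exact absurd (hγsD ▸ le_max_left (y 0) _) (not_le.mpr hcon)
    -- pick i maximizing γs over its support
    have hsupp : γs.support.Nonempty := Finsupp.support_nonempty_iff.mpr hγs0
    obtain ⟨i, hiS, himax⟩ := γs.support.exists_max_image (fun j => γs j) hsupp
    have hi1 : 1 ≤ γs i := Nat.one_le_iff_ne_zero.mpr (Finsupp.mem_support_iff.mp hiS)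
    -- a standard step: given ε with mdeg ε ≤ k and β with mdeg β ≤ k and β + ε = γs + γs,
    -- we get y (ε + ε) = D
    have step : ∀ β ε : Fin n →₀ ℕ, mdeg β ≤ k → mdeg ε ≤ k → β + ε = γs + γs →
        y (ε + ε) = D := by
      intro β ε hβ hε hsum
      have hcs := hCS y k hpsd β ε hβ hε
      rw [hsum, hγsD] at hcs
      have h1 : y (β + β) ≤ D := hDmax β hβ
      have h2 : y (ε + ε) ≤ D := hDmax ε hε
      have h3 : 0 ≤ y (ε + ε) := hdiag y k hpsd ε hε
      have h4 : 0 ≤ y (β + β) := hdiag y k hpsd β hβ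
      nlinarith
    rcases lt_or_eq_of_le hγsk with hlt | hk
    · -- mdeg γs < k : move up a level
      set β := γs - Finsupp.single i 1 with hβdef
      have hβc : β + Finsupp.single i 1 = γs :=
        tsub_add_cancel_of_le (Finsupp.single_le_iff.mpr hi1)
      set ε := γs + Finsupp.single i 1 with hεdef
      have hβd : mdeg β + 1 = mdeg γs := by
        rw [← hβc, mdeg_add, mdeg_single]
      have hεd : mdeg ε = mdeg γs + 1 := by rw [hεdef, mdeg_add, mdeg_single]
      have hεk : mdeg ε ≤ k := by omega
      have hsum : β + ε = γs + γs := by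
        rw [hεdef, ← hβc]; abel
      have hεD : y (ε + ε) = D := step β ε (by omega) hεk hsum
      have hεS1 : ε ∈ S1 := Finset.mem_filter.mpr ⟨(hS ε).mpr hεk, le_of_eq hεD.symm⟩
      have := hγ1max ε hεS1
      omega
    · -- mdeg γs = k
      by_cases hone : ∀ j ∈ γs.support, j = i
      · -- γs = single i k
        have hsingleton : γs = Finsupp.single i (γs i) := by
          ext l
          rw [Finsupp.single_apply]
          rcases eq_or_ne i l with rfl | hnl
          · rw [if_pos rfl]
          · rw [if_neg hnl]
            by_contra hc
            exact hnl ((hone l (Finsupp.mem_support_iff.mpr hc)).symm)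
        have hval : γs i = k := by
          have h' := hk
          rw [hsingleton, mdeg_single] at h'
          exact h'
        have hγseq : γs = Finsupp.single i k := hsingleton.trans (by rw [hval])
        have : y (γs + γs) = y (Finsupp.single i (2 * k)) := by
          rw [hγseq, ← Finsupp.single_add, two_mul]
        rw [hγsD] at this
        exact absurd (this ▸ hsingle_le i) (not_le.mpr hcon)
      · push_neg at hone
        obtain ⟨j, hjS, hji⟩ := hone
        have hj1 : 1 ≤ γs j := Nat.one_le_iff_ne_zero.mpr (Finsupp.mem_support_iff.mp hjS)
        have hij : γs j ≤ γs i := himax j hjS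
        set βj := γs - Finsupp.single j 1 with hβjdef
        set βi := γs - Finsupp.single i 1 with hβidef
        have hβjc : βj + Finsupp.single j 1 = γs :=
          tsub_add_cancel_of_le (Finsupp.single_le_iff.mpr hj1)
        have hβic : βi + Finsupp.single i 1 = γs :=
          tsub_add_cancel_of_le (Finsupp.single_le_iff.mpr hi1)
        set γ' := βj + Finsupp.single i 1 with hγ'def
        set γ'' := βi + Finsupp.single j 1 with hγ''def
        have hβjd : mdeg βj + 1 = k := by rw [← hk, ← hβjc, mdeg_add, mdeg_single]
        have hβid : mdeg βi + 1 = k := by rw [← hk, ← hβic, mdeg_add, mdeg_single]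
        have hγ'd : mdeg γ' = k := by rw [hγ'def, mdeg_add, mdeg_single]; omega
        have hγ''d : mdeg γ'' = k := by rw [hγ''def, mdeg_add, mdeg_single]; omega
        have hsum : γ'' + γ' = γs + γs := by
          rw [hγ'def, hγ''def]
          calc βi + Finsupp.single j 1 + (βj + Finsupp.single i 1)
              = (βi + Finsupp.single i 1) + (βj + Finsupp.single j 1) := by abel
            _ = γs + γs := by rw [hβic, hβjc]
        have hγ'D : y (γ' + γ') = D := step γ'' γ' (le_of_eq hγ''d) (le_of_eq hγ'd) hsum
        have hγ'S2 : γ' ∈ S2 := by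
          refine Finset.mem_filter.mpr ⟨Finset.mem_filter.mpr
            ⟨(hS γ').mpr (le_of_eq hγ'd), le_of_eq hγ'D.symm⟩, ?_⟩
          rw [hγ'd, ← hdegs, hk]
        have hpotle : pot γ' ≤ pot γs := hγsmax γ' hγ'S2
        have hβji : βj i = γs i := by
          rw [hβjdef, Finsupp.tsub_apply, Finsupp.single_apply, if_neg hji]
          rfl
        have hβjj : βj j + 1 = γs j := by
          have h' := DFunLike.congr_fun hβjc j
          simpa [Finsupp.single_apply] using h'
        have e1 : pot γ' = pot βj + 2 * (γs i) + 1 := by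
          rw [hγ'def, pot_add_single, hβji]; ring
        have e2 : pot γs = pot βj + 2 * (βj j) + 1 := by
          rw [← hβjc, pot_add_single]; ring
        omega
  -- conclusion
  have hsplit : ∃ γ δ : Fin n →₀ ℕ, γ + δ = α ∧ mdeg γ ≤ k ∧ mdeg δ ≤ k := by
    by_cases h : mdeg α ≤ k
    · exact ⟨0, α, by simp, by rw [mdeg_zero]; exact Nat.zero_le k, h⟩
    · push_neg at h
      obtain ⟨γ, hle, hdeg⟩ := exists_sub (mdeg α - k) α (Nat.sub_le _ _)
      refine ⟨γ, α - γ, by rw [add_comm]; exact tsub_add_cancel_of_le hle, by omega, ?_⟩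
      have : mdeg (α - γ) + mdeg γ = mdeg α := by
        rw [← mdeg_add, tsub_add_cancel_of_le hle]
      omega
  obtain ⟨γ, δ, hsum, hγk, hδk⟩ := hsplit
  have hcs := hCS y k hpsd γ δ hγk hδk
  rw [hsum] at hcs
  have a1 : y (γ + γ) ≤ M := le_trans (hDmax γ hγk) hDM
  have a2 : y (δ + δ) ≤ M := le_trans (hDmax δ hδk) hDM
  have a3 : 0 ≤ y (γ + γ) := hdiag y k hpsd γ hγk
  have a4 : 0 ≤ y (δ + δ) := hdiag y k hpsd δ hδk
  rcases abs_cases (y α) with ⟨h1, _⟩ | ⟨h1, _⟩ <;> nlinarith
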